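/- Let K be a field with char(K) not dividing C(n,d), 1 ≤ d ≤ n, N ≥ n+d, and I ⊆ K[x_1,...,x_N] the ideal generated by the S_N-orbit of e_d(x_1,...,x_n). Then the vanishing set of I in K^N equals the set of points with at most d-1 nonzero coordinates, i.e. V(I) = V(S_N.x_1···x_d). -/

import Mathlib

open MvPolynomial

/-- The elementary symmetric polynomial of degree `d` in the variables indexed by `S`. -/
noncomputable def esymmOn (K : Type*) [Field K] {N : ℕ} (S : Finset (Fin N)) (d : ℕ) :
    MvPolynomial (Fin N) K :=
  ∑ T ∈ Finset.powersetCard d S, ∏ i ∈ T, X i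

section Aux
open scoped Classical
variable {K : Type*} [Field K] {N : ℕ}

noncomputable def Esum (y : Fin N → K) (k : ℕ) (A : Finset (Fin N)) : K :=
  ∑ T ∈ Finset.powersetCard k A, ∏ i ∈ T, y i

lemma Esum_zero (y : Fin N → K) (A : Finset (Fin N)) : Esum y 0 A = 1 := by
  simp [Esum]

lemma Esum_insert (y : Fin N → K) (k : ℕ) {x : Fin N} {A : Finset (Fin N)} (h : x ∉ A) :
    Esum y (k + 1) (insert x A) = Esum y (k + 1) A + y x * Esum y k A := by
  classical
  unfold Esum
  rw [Finset.powersetCard_succ_insert h, Finset.sum_union, Finset.sum_image, Finset.mul_sum]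
  · congr 1
    refine Finset.sum_congr rfl fun T hT => ?_
    have hxT : x ∉ T := fun hx => h ((Finset.mem_powersetCard.1 hT).1 hx)
    rw [Finset.prod_insert hxT]
  · intro T hT T' hT' hEq
    have hxT : x ∉ T := fun hx => h ((Finset.mem_powersetCard.1 hT).1 hx)
    have hxT' : x ∉ T' := fun hx => h ((Finset.mem_powersetCard.1 hT').1 hx)
    have := congrArg (Finset.erase · x) hEq
    simpa [Finset.erase_insert, hxT, hxT'] using this
  · rw [Finset.disjoint_left]
    intro T hT hT2
    obtain ⟨T', hT', rfl⟩ := Finset.mem_image.1 hT2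
    exact h ((Finset.mem_powersetCard.1 hT).1 (Finset.mem_insert_self x T'))

lemma Esum_const (y : Fin N → K) (t : K) (k : ℕ) (A : Finset (Fin N))
    (h : ∀ i ∈ A, y i = t) : Esum y k A = (A.card.choose k : K) * t ^ k := by
  classical
  induction A using Finset.induction generalizing k with
  | empty =>
    cases k with
    | zero => simp [Esum_zero]
    | succ k => rw [Esum, Finset.powersetCard_eq_empty.2 (by simp)]; simp
  | insert x A hx ih =>
    have hA : ∀ i ∈ A, y i = t := fun i hi => h i (Finset.mem_insert_of_mem hi)
    have hxv : y x = t := h x (Finset.mem_insert_self x A)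
    cases k with
    | zero => simp [Esum_zero]
    | succ k =>
      rw [Esum_insert y k hx, ih (k+1) hA, ih k hA, Finset.card_insert_of_notMem hx, hxv,
        Nat.choose_succ_succ]
      push_cast
      ring

lemma desc_false (y : Fin N → K) (n d : ℕ) (hd : 1 ≤ d) (hdn : d ≤ n) (hN : n + d ≤ N)
    (hyp : ∀ A : Finset (Fin N), A.card = n → Esum y d A = 0) (t : K)
    (hr : d ≤ (Finset.univ.filter (fun i => y i ≠ t)).card)
    (hw : d ≤ (Finset.univ.filter (fun i => y i = t)).card) : False := by
  classical
  set R := Finset.univ.filter (fun i => y i ≠ t) with hR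
  set W := Finset.univ.filter (fun i => y i = t) with hW
  have hRW : Disjoint R W := by
    rw [Finset.disjoint_left]
    intro a haR haW
    exact (Finset.mem_filter.1 haR).2 (Finset.mem_filter.1 haW).2
  have hcards : R.card + W.card = N := by
    have := Finset.card_filter_add_card_filter_not
      (s := (Finset.univ : Finset (Fin N))) (p := fun i => y i ≠ t)
    simp only [Finset.card_univ, Fintype.card_fin, not_not] at this
    rw [hR, hW]
    convert this using 2
  have key : ∀ j, j ≤ d → ∀ C ⊆ R, ∀ W' ⊆ W,
      C.card + W'.card + j = n → C.card + j ≤ R.card → W'.card + j ≤ W.card →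
      Esum y (d - j) (C ∪ W') = 0 := by
    intro j
    induction j with
    | zero =>
      intro _ C hC W' hW' hcard _ _
      have hdis : Disjoint C W' := hRW.mono hC hW'
      have : (C ∪ W').card = n := by
        rw [Finset.card_union_of_disjoint hdis]; omega
      simpa using hyp _ this
    | succ j ih =>
      intro hj C hC W' hW' hcard hcr hcw
      obtain ⟨i, hiR, hiC⟩ : ∃ i ∈ R, i ∉ C :=
        Finset.not_subset.1 (fun hsub => by have := Finset.card_le_card hsub; omega)
      obtain ⟨j', hjW, hjW'⟩ : ∃ i ∈ W, i ∉ W' :=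
        Finset.not_subset.1 (fun hsub => by have := Finset.card_le_card hsub; omega)
      have hiW' : i ∉ W' := fun hmem => (Finset.disjoint_left.1 hRW) hiR (hW' hmem)
      have hjC : j' ∉ C := fun hmem => (Finset.disjoint_left.1 hRW) (hC hmem) hjW
      have hiB : i ∉ C ∪ W' := by simp [hiC, hiW']
      have hjB : j' ∉ C ∪ W' := by simp [hjC, hjW']
      have hsub : d - j = (d - (j+1)) + 1 := by omega
      have e1 : Esum y (d - j) (insert i (C ∪ W')) = 0 := by
        rw [← Finset.insert_union]
        refine ih (by omega) (insert i C) (Finset.insert_subset hiR hC) W' hW' ?_ ?_ ?_ <;>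
          first | omega | (rw [Finset.card_insert_of_notMem hiC]; omega)
      have e2 : Esum y (d - j) (insert j' (C ∪ W')) = 0 := by
        rw [Finset.union_comm, ← Finset.insert_union, Finset.union_comm]
        refine ih (by omega) C hC (insert j' W') (Finset.insert_subset hjW hW') ?_ ?_ ?_ <;>
          first | omega | (rw [Finset.card_insert_of_notMem hjW']; omega)
      rw [hsub, Esum_insert y _ hiB] at e1
      rw [hsub, Esum_insert y _ hjB] at e2
      have hyi : y i ≠ t := (Finset.mem_filter.1 hiR).2
      have hyj : y j' = t := (Finset.mem_filter.1 hjW).2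
      have : (y i - y j') * Esum y (d - (j+1)) (C ∪ W') = 0 := by
        have := sub_eq_zero.2 (e1.trans e2.symm)
        ring_nf at this ⊢
        linear_combination this
      rcases mul_eq_zero.1 this with h0 | h0
      · exact absurd (sub_eq_zero.1 h0) (by rw [hyj]; exact hyi)
      · exact h0
  -- choose final witnesses
  have hcle : min (R.card - d) (n - d) ≤ R.card := by omega
  obtain ⟨C0, hC0R, hC0card⟩ := Finset.exists_subset_card_eq hcle
  have hwle : n - d - C0.card ≤ W.card := by omega
  obtain ⟨W0, hW0W, hW0card⟩ := Finset.exists_subset_card_eq hwle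
  have := key d le_rfl C0 hC0R W0 hW0W (by omega) (by omega) (by omega)
  rw [Nat.sub_self, Esum_zero] at this
  exact one_ne_zero this


lemma swap_false (y : Fin N → K) (n d : ℕ) (hd : 1 ≤ d) (hdn : d ≤ n) (hN : n + d ≤ N)
    (hyp : ∀ A : Finset (Fin N), A.card = n → Esum y d A = 0)
    (hclass : ∀ t : K, (Finset.univ.filter (fun i => y i = t)).card ≤ d - 1) : False := by
  classical
  have key : ∀ j, j ≤ d → ∀ C : Finset (Fin N), C.card + j = n → Esum y (d - j) C = 0 := by
    intro j
    induction j with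
    | zero => intro _ C hcard; simpa using hyp C (by omega)
    | succ j ih =>
      intro hj C hcard
      have hccard : Cᶜ.card = N - C.card := by
        rw [Finset.card_compl]; simp
      have hcpos : 0 < Cᶜ.card := by omega
      obtain ⟨i, hi⟩ := Finset.card_pos.1 hcpos
      obtain ⟨j', hj', hyij⟩ : ∃ j' ∈ Cᶜ, y j' ≠ y i := by
        by_contra hcon
        push_neg at hcon
        have hsub : Cᶜ ⊆ Finset.univ.filter (fun k => y k = y i) := by
          intro a ha
          exact Finset.mem_filter.2 ⟨Finset.mem_univ a, hcon a ha⟩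
        have := Finset.card_le_card hsub
        have := hclass (y i)
        omega
      have hiC : i ∉ C := Finset.mem_compl.1 hi
      have hjC : j' ∉ C := Finset.mem_compl.1 hj'
      have hsub : d - j = (d - (j+1)) + 1 := by omega
      have e1 : Esum y (d - j) (insert i C) = 0 :=
        ih (by omega) _ (by rw [Finset.card_insert_of_notMem hiC]; omega)
      have e2 : Esum y (d - j) (insert j' C) = 0 :=
        ih (by omega) _ (by rw [Finset.card_insert_of_notMem hjC]; omega)
      rw [hsub, Esum_insert y _ hiC] at e1
      rw [hsub, Esum_insert y _ hjC] at e2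
      have hmul : (y i - y j') * Esum y (d - (j+1)) C = 0 := by
        linear_combination e1 - e2
      rcases mul_eq_zero.1 hmul with h0 | h0
      · exact absurd (sub_eq_zero.1 h0).symm hyij
      · exact h0
  have hle : n - d ≤ (Finset.univ : Finset (Fin N)).card := by
    rw [Finset.card_univ]; simp; omega
  obtain ⟨C, _, hCcard⟩ := Finset.exists_subset_card_eq hle
  have := key d le_rfl C (by omega)
  rw [Nat.sub_self, Esum_zero] at this
  exact one_ne_zero this


lemma exists_perm_image (S A : Finset (Fin N)) (h : S.card = A.card) :
    ∃ σ : Equiv.Perm (Fin N), S.image σ = A := by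
  classical
  have e1 : {x : Fin N // x ∈ S} ≃ {x : Fin N // x ∈ A} := Finset.equivOfCardEq h
  have hcompl : Fintype.card {x : Fin N // ¬ x ∈ S} = Fintype.card {x : Fin N // ¬ x ∈ A} := by
    rw [Fintype.card_subtype_compl, Fintype.card_subtype_compl]
    congr 1
    calc Fintype.card {x : Fin N // x ∈ S} = S.card := Fintype.card_coe S
      _ = A.card := h
      _ = Fintype.card {x : Fin N // x ∈ A} := (Fintype.card_coe A).symm
  have e2 : {x : Fin N // ¬ x ∈ S} ≃ {x : Fin N // ¬ x ∈ A} := Fintype.equivOfCardEq hcompl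
  refine ⟨Equiv.subtypeCongr e1 e2, ?_⟩
  have hsub : S.image (Equiv.subtypeCongr e1 e2) ⊆ A := by
    intro a ha
    obtain ⟨i, hi, rfl⟩ := Finset.mem_image.1 ha
    have : Equiv.subtypeCongr e1 e2 i = (e1 ⟨i, hi⟩ : Fin N) := by
      simp [Equiv.subtypeCongr, hi]
    rw [this]
    exact (e1 ⟨i, hi⟩).2
  refine Finset.eq_of_subset_of_card_le hsub ?_
  rw [Finset.card_image_of_injective _ (Equiv.injective _)]
  omega


lemma eval_rename_esymmOn (y : Fin N → K) (σ : Equiv.Perm (Fin N)) (S : Finset (Fin N)) (d : ℕ) :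
    eval y (rename σ (esymmOn K S d)) = Esum y d (S.image σ) := by
  classical
  have h1 : eval y (rename σ (esymmOn K S d))
      = ∑ T ∈ Finset.powersetCard d S, ∏ i ∈ T, y (σ i) := by
    simp [esymmOn, map_sum, map_prod]
  rw [h1, show S.image σ = S.map σ.toEmbedding from (Finset.map_eq_image σ.toEmbedding S).symm]
  unfold Esum
  rw [Finset.powersetCard_map, Finset.sum_map]
  refine Finset.sum_congr rfl fun T _ => ?_
  show ∏ i ∈ T, y (σ i) = ∏ i ∈ T.map σ.toEmbedding, y i
  rw [Finset.prod_map]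
  rfl

end Aux

/- If `char K ∤ C(n,d)`, `1 ≤ d ≤ n` and `N ≥ n + d`, then a point `y ∈ K^N` is a common
zero of all `S_N`-permutations of `e_d(x_1, …, x_n)` if and only if `y` has at most `d - 1`
nonzero coordinates (i.e. `V(I) = V(S_N.x_1 ⋯ x_d)`). -/
open scoped Classical in
theorem vanishing_set_eq (K : Type*) [Field K] (n d N : ℕ)
    (hd : 1 ≤ d) (hdn : d ≤ n) (hN : n + d ≤ N)
    (hchar : ((n.choose d : ℕ) : K) ≠ 0) (y : Fin N → K) :
    (∀ σ : Equiv.Perm (Fin N),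
        eval y (rename σ (esymmOn K (Finset.univ.filter (fun i : Fin N => (i : ℕ) < n)) d)) = 0)
      ↔ (Finset.univ.filter (fun i : Fin N => y i ≠ 0)).card ≤ d - 1 := by
  classical
  set S := Finset.univ.filter (fun i : Fin N => (i : ℕ) < n) with hSdef
  have hn_le : n ≤ N := by omega
  have hScard : S.card = n := by
    have : S = (Finset.univ : Finset (Fin n)).map (Fin.castLEEmb hn_le) := by
      ext i
      simp only [hSdef, Finset.mem_filter, Finset.mem_univ, true_and, Finset.mem_map,
        Fin.castLEEmb_apply]
      constructor
      · intro hi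
        exact ⟨⟨(i : ℕ), hi⟩, by ext; simp⟩
      · rintro ⟨a, rfl⟩
        simp
    rw [this, Finset.card_map, Finset.card_univ, Fintype.card_fin]
  constructor
  · intro hvan
    have hypE : ∀ A : Finset (Fin N), A.card = n → Esum y d A = 0 := by
      intro A hA
      obtain ⟨σ, hσ⟩ := exists_perm_image S A (by rw [hScard, hA])
      have := hvan σ
      rw [eval_rename_esymmOn, hσ] at this
      exact this
    by_contra hcon
    push_neg at hcon
    have hm : d ≤ (Finset.univ.filter (fun i : Fin N => y i ≠ 0)).card := by omega
    by_cases hzd : d ≤ (Finset.univ.filter (fun i : Fin N => y i = 0)).card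
    · exact desc_false y n d hd hdn hN hypE 0 hm hzd
    · by_cases hex : ∃ t : K, d ≤ (Finset.univ.filter (fun i : Fin N => y i = t)).card
      · obtain ⟨t, ht⟩ := hex
        have htne : t ≠ 0 := by rintro rfl; exact hzd ht
        by_cases hrt : d ≤ (Finset.univ.filter (fun i : Fin N => y i ≠ t)).card
        · exact desc_false y n d hd hdn hN hypE t hrt ht
        · have hpart : (Finset.univ.filter (fun i : Fin N => y i ≠ t)).card
              + (Finset.univ.filter (fun i : Fin N => y i = t)).card = N := by
            have := Finset.card_filter_add_card_filter_not
              (s := (Finset.univ : Finset (Fin N))) (p := fun i => y i ≠ t)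
            simp only [Finset.card_univ, Fintype.card_fin, not_not] at this
            convert this using 2
          have hwn : n ≤ (Finset.univ.filter (fun i : Fin N => y i = t)).card := by omega
          obtain ⟨A, hAsub, hAcard⟩ := Finset.exists_subset_card_eq hwn
          have hval : Esum y d A = (A.card.choose d : K) * t ^ d :=
            Esum_const y t d A (fun i hi => (Finset.mem_filter.1 (hAsub hi)).2)
          rw [hypE A hAcard, hAcard] at hval
          rcases mul_eq_zero.1 hval.symm with h0 | h0
          · exact hchar h0
          · exact htne (pow_eq_zero_iff (by omega)|>.1 h0)
      · push_neg at hex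
        exact swap_false y n d hd hdn hN hypE (fun t => by have := hex t; omega)
  · intro hsupp σ
    rw [eval_rename_esymmOn]
    unfold Esum
    refine Finset.sum_eq_zero fun T hT => ?_
    obtain ⟨hTsub, hTcard⟩ := Finset.mem_powersetCard.1 hT
    by_contra hprod
    have hsubset : T ⊆ Finset.univ.filter (fun i : Fin N => y i ≠ 0) := fun i hi =>
      Finset.mem_filter.2 ⟨Finset.mem_univ i, fun h0 => hprod (Finset.prod_eq_zero hi h0)⟩
    have := Finset.card_le_card hsubset
    omega
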